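/- Let $m$ be a positive integer and $K^* \in \mathbb{R}^{m\times m}$ an arbitrary matrix. Let $K_U \in \mathbb{R}^{m\times m}$ be a diagonal matrix with nonnegative diagonal entries and let $\mathcal{K} : \mathbb{R}^{m\times m} \to \mathbb{R}^{m\times m}$ be a linear map that maps skew-symmetric matrices to skew-symmetric matrices and satisfies $\mathrm{tr}(A^\top \mathcal{K}(A)) \ge 0$ for all $A$. Let $O, L : [0,\infty) \to \mathbb{R}^{m\times m}$ be differentiable with, for all $t \ge 0$: $L(t)$ diagonal, $O(t)$ orthogonal, $\dot L(t) = U(t)$ and $\dot O(t) = O(t)\,\Omega(t)$, where $X(t) := O(t)^\top \exp(L(t)) O(t)$, $B_1(t) := \exp(L(t)) - O(t) K^* O(t)^\top$, $B_2(t) := X(t) K^{*\top} - K^{*\top} X(t)$, $U(t) := -K_U \exp(-L(t))\,\mathrm{diag}(B_1(t))$, and $\Omega(t) := \mathcal{K}\big((B_2(t) - B_2(t)^\top)/2\big)$. Then the function $t \mapsto \|K^* - X(t)\|_F$ (Frobenius norm) is nonincreasing on $[0,\infty)$; in particular $\|K^* - X(t)\|_F \le \|K^* - X(0)\|_F$ for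 all $t \ge 0$, and the trajectory $\tilde K(t) = K^* - X(t)$ is globally bounded. -/

import Mathlib

open Matrix

attribute [local instance] Matrix.frobeniusNormedAddCommGroup Matrix.frobeniusNormedSpace
  Matrix.frobeniusNormedRing Matrix.frobeniusNormedAlgebra

variable {m : ℕ}

noncomputable def entryCLM (m : ℕ) (i j : Fin m) : Matrix (Fin m) (Fin m) ℝ →L[ℝ] ℝ :=
  LinearMap.toContinuousLinearMap
    { toFun := fun A => A i j
      map_add' := fun _ _ => rfl
      map_smul' := fun _ _ => rfl }

@[simp] lemma entryCLM_apply (i j : Fin m) (A : Matrix (Fin m) (Fin m) ℝ) :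
    entryCLM m i j A = A i j := rfl

noncomputable def diagCLM (m : ℕ) : (Fin m → ℝ) →L[ℝ] Matrix (Fin m) (Fin m) ℝ :=
  LinearMap.toContinuousLinearMap (Matrix.diagonalLinearMap (Fin m) ℝ ℝ)

@[simp] lemma diagCLM_apply (d : Fin m → ℝ) : diagCLM m d = Matrix.diagonal d := rfl

noncomputable def transCLM (m : ℕ) :
    Matrix (Fin m) (Fin m) ℝ →L[ℝ] Matrix (Fin m) (Fin m) ℝ :=
  LinearMap.toContinuousLinearMap
    { toFun := Matrix.transpose
      map_add' := Matrix.transpose_add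
      map_smul' := Matrix.transpose_smul }

@[simp] lemma transCLM_apply (A : Matrix (Fin m) (Fin m) ℝ) : transCLM m A = Aᵀ := rfl

noncomputable def traceCLM (m : ℕ) : Matrix (Fin m) (Fin m) ℝ →L[ℝ] ℝ :=
  LinearMap.toContinuousLinearMap (Matrix.traceLinearMap (Fin m) ℝ ℝ)

@[simp] lemma traceCLM_apply (A : Matrix (Fin m) (Fin m) ℝ) : traceCLM m A = A.trace := rfl

lemma exp_of_isDiag {A : Matrix (Fin m) (Fin m) ℝ} (h : A.IsDiag) :
    NormedSpace.exp A = Matrix.diagonal (fun i => Real.exp (A i i)) := by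
  conv_lhs => rw [← h.diagonal_diag]
  rw [Matrix.exp_diagonal, Pi.exp_def]
  simp_rw [← Real.exp_eq_exp_ℝ]
  rfl

lemma hasDerivWithinAt_exp_comp (L U : ℝ → Matrix (Fin m) (Fin m) ℝ) {t : ℝ}
    (ht : t ∈ Set.Ici (0:ℝ)) (hLdiag : ∀ s ∈ Set.Ici (0:ℝ), (L s).IsDiag)
    (hUdiag : (U t).IsDiag)
    (hL : HasDerivWithinAt L (U t) (Set.Ici (0:ℝ)) t) :
    HasDerivWithinAt (fun s => NormedSpace.exp (L s))
      (NormedSpace.exp (L t) * U t) (Set.Ici (0:ℝ)) t := by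
  have hcoord : ∀ i : Fin m, HasDerivWithinAt (fun s => Real.exp (L s i i))
      (Real.exp (L t i i) * U t i i) (Set.Ici 0) t := fun i => by
    have := ((entryCLM m i i).hasFDerivAt.comp_hasDerivWithinAt t hL)
    exact this.exp
  have hpi : HasDerivWithinAt (fun s => (fun i => Real.exp (L s i i)))
      (fun i => Real.exp (L t i i) * U t i i) (Set.Ici 0) t :=
    hasDerivWithinAt_pi.2 hcoord
  have hg : HasDerivWithinAt (fun s => Matrix.diagonal (fun i => Real.exp (L s i i)))
      (Matrix.diagonal (fun i => Real.exp (L t i i) * U t i i)) (Set.Ici 0) t := by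
    have := (diagCLM m).hasFDerivAt.comp_hasDerivWithinAt t hpi
    exact this
  have heq : ∀ s ∈ Set.Ici (0:ℝ),
      NormedSpace.exp (L s) = Matrix.diagonal (fun i => Real.exp (L s i i)) :=
    fun s hs => exp_of_isDiag (hLdiag s hs)
  have h2 : Matrix.diagonal (fun i => Real.exp (L t i i) * U t i i)
      = NormedSpace.exp (L t) * U t := by
    rw [exp_of_isDiag (hLdiag t ht)]
    conv_rhs => rw [← hUdiag.diagonal_diag]
    rw [Matrix.diagonal_mul_diagonal]
    rfl
  exact h2 ▸ (hg.congr (fun s hs => heq s hs) (heq t ht))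

lemma norm_sq_eq_trace (A : Matrix (Fin m) (Fin m) ℝ) : ‖A‖ ^ 2 = (Aᵀ * A).trace := by
  have h0 : (0:ℝ) ≤ ∑ i, ∑ j, ‖A i j‖ ^ (2:ℝ) := by positivity
  rw [Matrix.frobenius_norm_def, ← Real.rpow_natCast _ 2, ← Real.rpow_mul h0]
  norm_num
  rw [Matrix.trace]
  simp_rw [Matrix.diag, Matrix.mul_apply, Matrix.transpose_apply]
  rw [Finset.sum_comm]
  congr 1; funext i; congr 1; funext j
  ring

lemma trace_term1 (m : ℕ) (Kstar Xt W : Matrix (Fin m) (Fin m) ℝ)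
    (hXsym : Xtᵀ = Xt) :
    ((Kstar - Xt)ᵀ * (Xt * W - W * Xt)).trace
      = ((Kstarᵀ * Xt - Xt * Kstarᵀ) * W).trace := by
  have c1 : (Kstarᵀ * W * Xt).trace = (Xt * Kstarᵀ * W).trace := by
    rw [Matrix.trace_mul_comm (Kstarᵀ * W) Xt, Matrix.mul_assoc]
  have c2 : (Xt * W * Xt).trace = (Xt * Xt * W).trace := by
    rw [Matrix.trace_mul_comm (Xt * W) Xt, Matrix.mul_assoc]
  rw [Matrix.transpose_sub, hXsym]
  simp only [Matrix.sub_mul, Matrix.mul_sub, Matrix.trace_sub, ← Matrix.mul_assoc]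
  rw [c1, c2]
  ring

lemma trace_skew_pair (m : ℕ) (B W : Matrix (Fin m) (Fin m) ℝ) (hW : Wᵀ = -W) :
    (((1/2:ℝ) • (B - Bᵀ))ᵀ * W).trace = -((B * W).trace) := by
  have h1 : (Bᵀ * W).trace = -((B * W).trace) := by
    rw [← Matrix.trace_transpose (Bᵀ * W), Matrix.transpose_mul, Matrix.transpose_transpose, hW,
      Matrix.neg_mul, Matrix.trace_neg, Matrix.trace_mul_comm]
  rw [Matrix.transpose_smul, Matrix.transpose_sub, Matrix.transpose_transpose,
    Matrix.smul_mul, Matrix.trace_smul, Matrix.sub_mul, Matrix.trace_sub, h1]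
  simp only [smul_eq_mul]
  ring

/-- along the tracker dynamics the Frobenius norm of the tracking
error `K* - X(t)` is nonincreasing on `[0, ∞)`; in particular the trajectory
`K* - X(t)` is globally bounded. (Here the ambient norm is the Frobenius norm.) -/
theorem stmt_13 (m : ℕ) (hm : 0 < m)
    (Kstar : Matrix (Fin m) (Fin m) ℝ)
    (KU : Matrix (Fin m) (Fin m) ℝ) (hKU : KU.IsDiag) (hKUpos : ∀ i, 0 ≤ KU i i)
    (𝒦 : Matrix (Fin m) (Fin m) ℝ →ₗ[ℝ] Matrix (Fin m) (Fin m) ℝ)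
    (h𝒦skew : ∀ A : Matrix (Fin m) (Fin m) ℝ, Aᵀ = -A → (𝒦 A)ᵀ = -(𝒦 A))
    (h𝒦psd : ∀ A : Matrix (Fin m) (Fin m) ℝ, 0 ≤ (Aᵀ * 𝒦 A).trace)
    (O L X B1 B2 U Ω : ℝ → Matrix (Fin m) (Fin m) ℝ)
    (hLdiag : ∀ t ∈ Set.Ici (0 : ℝ), (L t).IsDiag)
    (hOorth : ∀ t ∈ Set.Ici (0 : ℝ), O t * (O t)ᵀ = 1)
    (hX : ∀ t, X t = (O t)ᵀ * NormedSpace.exp (L t) * O t)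
    (hB1 : ∀ t, B1 t = NormedSpace.exp (L t) - O t * Kstar * (O t)ᵀ)
    (hB2 : ∀ t, B2 t = X t * Kstarᵀ - Kstarᵀ * X t)
    (hU : ∀ t, U t = -(KU * NormedSpace.exp (-L t) * Matrix.diagonal (B1 t).diag))
    (hΩ : ∀ t, Ω t = 𝒦 ((1 / 2 : ℝ) • (B2 t - (B2 t)ᵀ)))
    (hL : ∀ t ∈ Set.Ici (0 : ℝ), HasDerivWithinAt L (U t) (Set.Ici (0 : ℝ)) t)
    (hO : ∀ t ∈ Set.Ici (0 : ℝ), HasDerivWithinAt O (O t * Ω t) (Set.Ici (0 : ℝ)) t) :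
    AntitoneOn (fun t => ‖Kstar - X t‖) (Set.Ici (0 : ℝ)) ∧
      ∀ t ∈ Set.Ici (0 : ℝ), ‖Kstar - X t‖ ≤ ‖Kstar - X 0‖ := by
  have hOorth' : ∀ t ∈ Set.Ici (0:ℝ), (O t)ᵀ * O t = 1 := fun t ht =>
    mul_eq_one_comm.mp (hOorth t ht)
  have hEdiag : ∀ t ∈ Set.Ici (0:ℝ),
      NormedSpace.exp (L t) = Matrix.diagonal (fun i => Real.exp (L t i i)) :=
    fun t ht => exp_of_isDiag (hLdiag t ht)
  have hENdiag : ∀ t ∈ Set.Ici (0:ℝ),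
      NormedSpace.exp (-L t) = Matrix.diagonal (fun i => Real.exp (-(L t i i))) := by
    intro t ht
    rw [exp_of_isDiag (hLdiag t ht).neg]
    simp [Matrix.neg_apply]
  have hUdiag : ∀ t ∈ Set.Ici (0:ℝ), (U t).IsDiag := by
    intro t ht
    rw [hU t, hENdiag t ht, ← hKU.diagonal_diag, Matrix.diagonal_mul_diagonal,
      Matrix.diagonal_mul_diagonal]
    exact (Matrix.isDiag_diagonal _).neg
  have hEsym : ∀ t ∈ Set.Ici (0:ℝ),
      (NormedSpace.exp (L t))ᵀ = NormedSpace.exp (L t) := by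
    intro t ht
    rw [hEdiag t ht, Matrix.diagonal_transpose]
  have hXsym : ∀ t ∈ Set.Ici (0:ℝ), (X t)ᵀ = X t := by
    intro t ht
    rw [hX t, Matrix.transpose_mul, Matrix.transpose_mul, Matrix.transpose_transpose,
      hEsym t ht, Matrix.mul_assoc]
  have hΩskew : ∀ t, (Ω t)ᵀ = -(Ω t) := by
    intro t
    rw [hΩ t]
    apply h𝒦skew
    rw [Matrix.transpose_smul, Matrix.transpose_sub, Matrix.transpose_transpose,
      ← smul_neg, neg_sub]
  -- the derivative of X
  set X' : ℝ → Matrix (Fin m) (Fin m) ℝ := fun t =>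
    ((O t * Ω t)ᵀ * NormedSpace.exp (L t) + (O t)ᵀ * (NormedSpace.exp (L t) * U t)) * O t
      + (O t)ᵀ * NormedSpace.exp (L t) * (O t * Ω t) with hX'def
  have hXderiv : ∀ t ∈ Set.Ici (0:ℝ), HasDerivWithinAt X (X' t) (Set.Ici 0) t := by
    intro t ht
    have hOt : HasDerivWithinAt (fun s => (O s)ᵀ) ((O t * Ω t)ᵀ) (Set.Ici 0) t := by
      exact (transCLM m).hasFDerivAt.comp_hasDerivWithinAt t (hO t ht)
    have hEd : HasDerivWithinAt (fun s => NormedSpace.exp (L s))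
        (NormedSpace.exp (L t) * U t) (Set.Ici 0) t :=
      hasDerivWithinAt_exp_comp L U ht hLdiag (hUdiag t ht) (hL t ht)
    have h1 := (hOt.mul hEd).mul (hO t ht)
    have hXfun : X = fun s => (O s)ᵀ * NormedSpace.exp (L s) * O s := funext hX
    rw [hXfun]
    exact h1
  -- the Lyapunov function and its derivative
  set V : ℝ → ℝ := fun t => ((Kstar - X t)ᵀ * (Kstar - X t)).trace with hVdef
  set V' : ℝ → ℝ := fun t =>
    ((-X' t)ᵀ * (Kstar - X t) + (Kstar - X t)ᵀ * (-X' t)).trace with hV'def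
  have hVderiv : ∀ t ∈ Set.Ici (0:ℝ), HasDerivWithinAt V (V' t) (Set.Ici 0) t := by
    intro t ht
    have hKd : HasDerivWithinAt (fun s => Kstar - X s) (-X' t) (Set.Ici 0) t :=
      (hXderiv t ht).const_sub Kstar
    have hKdT : HasDerivWithinAt (fun s => (Kstar - X s)ᵀ) ((-X' t)ᵀ) (Set.Ici 0) t := by
      exact (transCLM m).hasFDerivAt.comp_hasDerivWithinAt t hKd
    have h4 := (traceCLM m).hasFDerivAt.comp_hasDerivWithinAt t (hKdT.mul hKd)
    exact h4
  -- nonpositivity of the derivative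
  have hV'le : ∀ t ∈ Set.Ici (0:ℝ), V' t ≤ 0 := by
    intro t ht
    -- decomposition of X'
    have hX'decomp : X' t = (X t * Ω t - Ω t * X t)
        + (O t)ᵀ * (NormedSpace.exp (L t) * U t) * O t := by
      rw [hX'def]
      simp only []
      rw [Matrix.transpose_mul, hΩskew t, hX t]
      noncomm_ring
    -- first term is nonneg
    have hT1 : 0 ≤ ((Kstar - X t)ᵀ * (X t * Ω t - Ω t * X t)).trace := by
      rw [trace_term1 m Kstar (X t) (Ω t) (hXsym t ht)]
      have : Kstarᵀ * X t - X t * Kstarᵀ = -(B2 t) := by rw [hB2 t]; abel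
      rw [this, Matrix.neg_mul, Matrix.trace_neg, ← trace_skew_pair m (B2 t) (Ω t) (hΩskew t)]
      rw [hΩ t]
      exact h𝒦psd _
    -- second term is nonneg
    have hEU : NormedSpace.exp (L t) * U t = -(KU * Matrix.diagonal (B1 t).diag) := by
      rw [hU t, hENdiag t ht, hEdiag t ht, ← hKU.diagonal_diag]
      simp only [Matrix.diagonal_mul_diagonal, Matrix.mul_neg, Matrix.diagonal_neg]
      refine congrArg Matrix.diagonal (funext fun i => ?_)
      have h := Real.exp_ne_zero (L t i i)
      rw [Real.exp_neg]
      field_simp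
    have hPXP : O t * X t * (O t)ᵀ = NormedSpace.exp (L t) := by
      rw [hX t]
      calc O t * ((O t)ᵀ * NormedSpace.exp (L t) * O t) * (O t)ᵀ
          = (O t * (O t)ᵀ) * NormedSpace.exp (L t) * (O t * (O t)ᵀ) := by noncomm_ring
        _ = NormedSpace.exp (L t) := by rw [hOorth t ht]; simp
    have hT2 : 0 ≤ ((Kstar - X t)ᵀ * ((O t)ᵀ * (NormedSpace.exp (L t) * U t) * O t)).trace := by
      have hcyc : ((Kstar - X t)ᵀ * ((O t)ᵀ * (NormedSpace.exp (L t) * U t) * O t)).trace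
          = ((O t * (Kstar - X t)ᵀ * (O t)ᵀ) * (NormedSpace.exp (L t) * U t)).trace := by
        rw [show (Kstar - X t)ᵀ * ((O t)ᵀ * (NormedSpace.exp (L t) * U t) * O t)
            = ((Kstar - X t)ᵀ * ((O t)ᵀ * (NormedSpace.exp (L t) * U t))) * O t by
          noncomm_ring]
        rw [Matrix.trace_mul_comm]
        congr 1
        noncomm_ring
      rw [hcyc]
      have hmid : O t * (Kstar - X t)ᵀ * (O t)ᵀ
          = -(NormedSpace.exp (L t) - O t * Kstarᵀ * (O t)ᵀ) := by
        rw [Matrix.transpose_sub, hXsym t ht]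
        rw [Matrix.mul_sub, Matrix.sub_mul]
        rw [show O t * (Kstar)ᵀ * (O t)ᵀ = O t * Kstarᵀ * (O t)ᵀ from rfl]
        rw [hPXP]
        abel
      rw [hmid, hEU]
      rw [neg_mul_neg]
      have hB1T : NormedSpace.exp (L t) - O t * Kstarᵀ * (O t)ᵀ = (B1 t)ᵀ := by
        rw [hB1 t, Matrix.transpose_sub, hEsym t ht, Matrix.transpose_mul, Matrix.transpose_mul,
          Matrix.transpose_transpose, Matrix.mul_assoc]
      rw [hB1T, ← hKU.diagonal_diag, Matrix.diagonal_mul_diagonal]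
      rw [Matrix.trace]
      simp only [Matrix.diag_apply, Matrix.mul_diagonal, Matrix.transpose_apply]
      apply Finset.sum_nonneg
      intro i _
      have := hKUpos i
      have h2 := mul_self_nonneg (B1 t i i)
      nlinarith
    -- combine
    have hcomb : V' t = -(2 * (((Kstar - X t)ᵀ) * X' t).trace) := by
      rw [hV'def]
      simp only []
      rw [Matrix.trace_add]
      have h3 : ((-X' t)ᵀ * (Kstar - X t)).trace = ((Kstar - X t)ᵀ * (-X' t)).trace := by
        rw [← Matrix.trace_transpose ((-X' t)ᵀ * (Kstar - X t)), Matrix.transpose_mul,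
          Matrix.transpose_transpose]
      rw [h3, Matrix.mul_neg, Matrix.trace_neg]
      ring
    rw [hcomb]
    have : 0 ≤ (((Kstar - X t)ᵀ) * X' t).trace := by
      rw [hX'decomp, Matrix.mul_add, Matrix.trace_add]
      exact add_nonneg hT1 hT2
    linarith
  -- V is antitone
  have hVanti : AntitoneOn V (Set.Ici (0:ℝ)) := by
    apply antitoneOn_of_hasDerivWithinAt_nonpos (convex_Ici 0)
      (fun t ht => (hVderiv t ht).continuousWithinAt) (f' := V')
    · intro x hx
      exact ((hVderiv x (interior_subset hx)).mono interior_subset)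
    · intro x hx
      exact hV'le x (interior_subset hx)
  -- conclude for the norm
  have hnorm : ∀ a ∈ Set.Ici (0:ℝ), ∀ b ∈ Set.Ici (0:ℝ), a ≤ b →
      ‖Kstar - X b‖ ≤ ‖Kstar - X a‖ := by
    intro a ha b hb hab
    have h := hVanti ha hb hab
    have ha2 : ‖Kstar - X a‖^2 = V a := norm_sq_eq_trace _
    have hb2 : ‖Kstar - X b‖^2 = V b := norm_sq_eq_trace _
    nlinarith [norm_nonneg (Kstar - X b), norm_nonneg (Kstar - X a)]
  exact ⟨fun a ha b hb hab => hnorm a ha b hb hab,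
    fun t ht => hnorm 0 Set.self_mem_Ici t ht ht⟩
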